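/- Let G be a 2-connected complete multipartite graph (with at least two parts, so that G contains a cycle). Then every longest cycle of G is a dominating cycle: for every longest cycle C, there is no edge of G with both endpoints outside V(C). -/

import Mathlib

open SimpleGraph

def IsCycleEmb {V : Type*} (G : SimpleGraph V) (n : ℕ) (f : ZMod n → V) : Prop :=
  3 ≤ n ∧ Function.Injective f ∧ ∀ i : ZMod n, G.Adj (f i) (f (i + 1))

def IsLongestCycle {V : Type*} (G : SimpleGraph V) (n : ℕ) (f : ZMod n → V) : Prop :=
  IsCycleEmb G n f ∧ ∀ (m : ℕ) (g : ZMod m → V), IsCycleEmb G m g → m ≤ n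

def IsDominatingCycle {V : Type*} (G : SimpleGraph V) (n : ℕ) (f : ZMod n → V) : Prop :=
  IsCycleEmb G n f ∧ ∀ a b : V, G.Adj a b → a ∈ Set.range f ∨ b ∈ Set.range f

def IsCompOutside {V : Type*} (G : SimpleGraph V) (C : Set V) (H : Set V) : Prop :=
  H.Nonempty ∧ Disjoint H C ∧ (G.induce H).Connected ∧
    ∀ a ∈ H, ∀ b : V, G.Adj a b → b ∉ C → b ∈ H

def TwoConnected {V : Type*} (G : SimpleGraph V) : Prop :=
  3 ≤ Nat.card V ∧ ∀ v : V, (G.induce ({v}ᶜ : Set V)).Connected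

def KConnected {V : Type*} (G : SimpleGraph V) (k : ℕ) : Prop :=
  k < Nat.card V ∧ ∀ S : Set V, S.ncard < k → (G.induce (Sᶜ : Set V)).Connected

def HFree {W V : Type*} (H : SimpleGraph W) (G : SimpleGraph V) : Prop :=
  ¬ Nonempty (H ↪g G)

def IsCompleteMultipartite {V : Type*} (G : SimpleGraph V) : Prop :=
  ∃ s : Setoid V, ∀ a b : V, G.Adj a b ↔ ¬ s.r a b

/-- `W = K₁ + 3K₂`: vertex 0 joined to three disjoint edges 12, 34, 56. -/
def Wgraph : SimpleGraph (Fin 7) :=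
  SimpleGraph.fromRel (fun a b =>
    a = 0 ∨ (a = 1 ∧ b = 2) ∨ (a = 3 ∧ b = 4) ∨ (a = 5 ∧ b = 6))

/-- `Z₁`, the paw: triangle 012 plus pendant edge 23. -/
def pawGraph : SimpleGraph (Fin 4) :=
  SimpleGraph.fromRel (fun a b =>
    (a = 0 ∧ b = 1) ∨ (a = 1 ∧ b = 2) ∨ (a = 0 ∧ b = 2) ∨ (a = 2 ∧ b = 3))

/-- The claw `K₁,₃`. -/
def clawGraph : SimpleGraph (Fin 4) :=
  SimpleGraph.fromRel (fun a _ => a = 0)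

/-- `K₄` minus the edge 23. -/
def K4minusGraph : SimpleGraph (Fin 4) :=
  SimpleGraph.fromRel (fun a b => ¬((a = 2 ∧ b = 3) ∨ (a = 3 ∧ b = 2)))

/-- `K₁,₃**`: spider with legs of lengths 2, 2, 1 (center 0, legs 0-1-2, 0-3-4, 0-5). -/
def spider221 : SimpleGraph (Fin 6) :=
  SimpleGraph.fromRel (fun a b =>
    (a = 0 ∧ b = 1) ∨ (a = 1 ∧ b = 2) ∨ (a = 0 ∧ b = 3) ∨ (a = 3 ∧ b = 4) ∨ (a = 0 ∧ b = 5))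

/-- The theta graph `A_s`: two vertices joined by three internally disjoint paths,
each with `s` internal vertices. -/
def thetaGraph (s : ℕ) : SimpleGraph (Fin 2 ⊕ Fin 3 × Fin s) :=
  SimpleGraph.fromRel (fun a b =>
    (∃ (j : Fin 3) (k : Fin s), a = Sum.inl 0 ∧ b = Sum.inr (j, k) ∧ (k : ℕ) = 0) ∨
    (∃ (j : Fin 3) (k : Fin s), a = Sum.inl 1 ∧ b = Sum.inr (j, k) ∧ (k : ℕ) = s - 1) ∨
    (∃ (j : Fin 3) (k l : Fin s), a = Sum.inr (j, k) ∧ b = Sum.inr (j, l) ∧ (l : ℕ) = (k : ℕ) + 1))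

/-- `A′_s = 2K₁ + sK₂`. -/
def APrime (s : ℕ) : SimpleGraph (Fin 2 ⊕ Fin s × Fin 2) :=
  SimpleGraph.fromRel (fun a b =>
    (∃ (i : Fin 2) (x : Fin s × Fin 2), a = Sum.inl i ∧ b = Sum.inr x) ∨
    (∃ j : Fin s, a = Sum.inr (j, 0) ∧ b = Sum.inr (j, 1)))

/-- `A″_s = K₂ + (2K₂ ∪ K_s)`. -/
def ADoublePrime (s : ℕ) : SimpleGraph (Fin 2 ⊕ (Fin 2 × Fin 2 ⊕ Fin s)) :=
  SimpleGraph.fromRel (fun a b =>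
    (∃ i : Fin 2, a = Sum.inl i) ∨
    (∃ j : Fin 2, a = Sum.inr (Sum.inl (j, 0)) ∧ b = Sum.inr (Sum.inl (j, 1))) ∨
    (∃ p q : Fin s, a = Sum.inr (Sum.inr p) ∧ b = Sum.inr (Sum.inr q)))

/-- `A_s⁽¹⁾`: two disjoint triangles joined by three vertex-disjoint paths with `s`
internal vertices each. -/
def AOne (s : ℕ) : SimpleGraph (Fin 2 × Fin 3 ⊕ Fin 3 × Fin s) :=
  SimpleGraph.fromRel (fun a b =>
    (∃ (t : Fin 2) (i j : Fin 3), a = Sum.inl (t, i) ∧ b = Sum.inl (t, j)) ∨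
    (∃ (j : Fin 3) (k : Fin s), a = Sum.inl (0, j) ∧ b = Sum.inr (j, k) ∧ (k : ℕ) = 0) ∨
    (∃ (j : Fin 3) (k : Fin s), a = Sum.inl (1, j) ∧ b = Sum.inr (j, k) ∧ (k : ℕ) = s - 1) ∨
    (∃ (j : Fin 3) (k l : Fin s), a = Sum.inr (j, k) ∧ b = Sum.inr (j, l) ∧ (l : ℕ) = (k : ℕ) + 1))

/-- `A_s⁽⁵⁾`: vertices `x₁, x₂` and `y_{i,j}`; edges `x₁x₂`, `y_{1,j}y_{2,j}`, `x_i y_{i,j}`. -/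
def AFive (s : ℕ) : SimpleGraph (Fin 2 ⊕ Fin 2 × Fin s) :=
  SimpleGraph.fromRel (fun a b =>
    (a = Sum.inl 0 ∧ b = Sum.inl 1) ∨
    (∃ j : Fin s, a = Sum.inr (0, j) ∧ b = Sum.inr (1, j)) ∨
    (∃ (i : Fin 2) (j : Fin s), a = Sum.inl i ∧ b = Sum.inr (i, j)))

lemma cast_sub_one_eq_neg_one (n : ℕ) (hn : 1 ≤ n) : ((n - 1 : ℕ) : ZMod n) = -1 := by
  rw [Nat.cast_sub hn, ZMod.natCast_self, Nat.cast_one, zero_sub]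

lemma insert_one {V : Type*} (G : SimpleGraph V) (n : ℕ) (f : ZMod n → V)
    (hc : IsCycleEmb G n f) (a : V) (ha : a ∉ Set.range f)
    (h1 : G.Adj (f (-1)) a) (h2 : G.Adj a (f 0)) :
    IsCycleEmb G (n+1) (fun j => if j.val < n then f j.val else a) := by
  obtain ⟨hn3, hinj, hadj⟩ := hc
  haveI : NeZero n := ⟨by omega⟩
  haveI : NeZero (n+1) := ⟨by omega⟩
  haveI : Fact (1 < n+1) := ⟨by omega⟩
  have hneg := cast_sub_one_eq_neg_one n (by omega)
  refine ⟨by omega, ?_, ?_⟩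
  · intro j k hjk
    simp only at hjk
    by_cases hj : j.val < n <;> by_cases hk : k.val < n
    · simp only [hj, hk, if_pos] at hjk
      apply ZMod.val_injective
      have h' := congrArg ZMod.val (hinj hjk)
      rwa [ZMod.val_cast_of_lt hj, ZMod.val_cast_of_lt hk] at h'
    · simp only [hj, hk, if_pos, if_neg, if_false] at hjk
      exact absurd ⟨_, hjk⟩ ha
    · simp only [hj, hk, if_pos, if_neg, if_false] at hjk
      exact absurd ⟨_, hjk.symm⟩ ha
    · have hj' := j.val_lt
      have hk' := k.val_lt
      apply ZMod.val_injective
      omega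
  · intro j
    have hj1 : (j + 1).val = (j.val + 1) % (n + 1) := by
      rw [ZMod.val_add, ZMod.val_one]
    have hjlt := j.val_lt
    by_cases h : j.val + 1 < n
    · have hj : j.val < n := by omega
      have hv : (j+1).val = j.val + 1 := by rw [hj1, Nat.mod_eq_of_lt (by omega)]
      simp only [hj, hv, h, if_pos]
      have := hadj (j.val : ZMod n)
      rwa [show ((j.val : ZMod n) + 1) = ((j.val + 1 : ℕ) : ZMod n) by push_cast; ring] at this
    · by_cases h2' : j.val < n
      · have hj : j.val = n - 1 := by omega
        have hv : (j+1).val = n := by rw [hj1, Nat.mod_eq_of_lt (by omega)]; omega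
        simp only [hv, hj, h2', if_pos]
        rw [if_neg (lt_irrefl n), hneg, if_pos (show n - 1 < n by omega)]
        exact h1
      · have hj : j.val = n := by omega
        have hv : (j+1).val = 0 := by rw [hj1, hj, Nat.mod_self]
        simp only [hj, hv]
        rw [if_neg (lt_irrefl n), if_pos (by omega : 0 < n), Nat.cast_zero]
        exact h2

lemma insert_two {V : Type*} (G : SimpleGraph V) (n : ℕ) (f : ZMod n → V)
    (hc : IsCycleEmb G n f) (a b : V) (ha : a ∉ Set.range f) (hb : b ∉ Set.range f)
    (hab : a ≠ b)
    (h1 : G.Adj (f (-1)) b) (h2 : G.Adj b a) (h3 : G.Adj a (f 0)) :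
    IsCycleEmb G (n+2) (fun j => if j.val < n then f j.val else if j.val = n then b else a) := by
  obtain ⟨hn3, hinj, hadj⟩ := hc
  haveI : NeZero n := ⟨by omega⟩
  haveI : NeZero (n+2) := ⟨by omega⟩
  haveI : Fact (1 < n+2) := ⟨by omega⟩
  have hneg := cast_sub_one_eq_neg_one n (by omega)
  refine ⟨by omega, ?_, ?_⟩
  · intro j k hjk
    simp only at hjk
    by_cases hj : j.val < n <;> by_cases hk : k.val < n
    · simp only [hj, hk, if_pos] at hjk
      apply ZMod.val_injective
      have h' := congrArg ZMod.val (hinj hjk)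
      rwa [ZMod.val_cast_of_lt hj, ZMod.val_cast_of_lt hk] at h'
    · simp only [hj, hk, if_pos, if_neg, if_false] at hjk
      split at hjk
      · exact absurd ⟨_, hjk⟩ hb
      · exact absurd ⟨_, hjk⟩ ha
    · simp only [hj, hk, if_pos, if_neg, if_false] at hjk
      split at hjk
      · exact absurd ⟨_, hjk.symm⟩ hb
      · exact absurd ⟨_, hjk.symm⟩ ha
    · simp only [hj, hk, if_neg, if_false] at hjk
      have hj' := j.val_lt
      have hk' := k.val_lt
      apply ZMod.val_injective
      split at hjk <;> split at hjk <;>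
        first | omega | exact absurd hjk hab.symm | exact absurd hjk hab
  · intro j
    have hj1 : (j + 1).val = (j.val + 1) % (n + 2) := by
      rw [ZMod.val_add, ZMod.val_one]
    have hjlt := j.val_lt
    by_cases h : j.val + 1 < n
    · have hj : j.val < n := by omega
      have hv : (j+1).val = j.val + 1 := by rw [hj1, Nat.mod_eq_of_lt (by omega)]
      simp only [hj, hv, h, if_pos]
      have := hadj (j.val : ZMod n)
      rwa [show ((j.val : ZMod n) + 1) = ((j.val + 1 : ℕ) : ZMod n) by push_cast; ring] at this
    · by_cases h2' : j.val < n
      · have hj : j.val = n - 1 := by omega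
        have hv : (j+1).val = n := by rw [hj1, Nat.mod_eq_of_lt (by omega)]; omega
        simp only [hv, hj, h2', if_pos]
        rw [if_pos (show n - 1 < n by omega), hneg, if_neg (lt_irrefl n)]
        exact h1
      · by_cases h3' : j.val = n
        · have hv : (j+1).val = n + 1 := by rw [hj1, Nat.mod_eq_of_lt (by omega)]; omega
          simp only [h3', hv]
          rw [if_neg (by omega : ¬ n + 1 < n), if_neg (by omega : ¬ n + 1 = n)]
          simpa using h2
        · have hj : j.val = n + 1 := by omega
          have hv : (j+1).val = 0 := by
            rw [hj1, hj, show n + 1 + 1 = n + 2 from rfl, Nat.mod_self]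
          simp only [hj, hv]
          rw [if_neg (by omega : ¬ n + 1 < n), if_neg (by omega : ¬ n + 1 = n),
            if_pos (by omega : 0 < n), Nat.cast_zero]
          exact h3

/-- In a 2-connected complete multipartite graph (with at least two parts, i.e. with an
edge), every longest cycle is dominating: no edge has both endpoints off the cycle. -/
theorem stmt6 {V : Type*} [Fintype V] (G : SimpleGraph V)
    (h2 : TwoConnected G) (hcm : _root_.IsCompleteMultipartite G)
    (hedge : ∃ a b : V, G.Adj a b) :
    ∀ (n : ℕ) (f : ZMod n → V), IsLongestCycle G n f →
      ¬ ∃ a b : V, G.Adj a b ∧ a ∉ Set.range f ∧ b ∉ Set.range f := by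
  rintro n f ⟨hcyc, hmax⟩ ⟨a, b, hab, ha, hb⟩
  obtain ⟨s, hs⟩ := hcm
  have hrab : ¬ s.r a b := (hs a b).mp hab
  have noc1 : ¬ (G.Adj (f (-1)) a ∧ G.Adj (f 0) a) := by
    rintro ⟨p, q⟩
    have := hmax (n+1) _ (insert_one G n f hcyc a ha p q.symm)
    omega
  have noc2 : ¬ (G.Adj (f (-1)) b ∧ G.Adj (f 0) b) := by
    rintro ⟨p, q⟩
    have := hmax (n+1) _ (insert_one G n f hcyc b hb p q.symm)
    omega
  have noc3 : ¬ (G.Adj (f (-1)) b ∧ G.Adj (f 0) a) := by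
    rintro ⟨p, q⟩
    have := hmax (n+2) _ (insert_two G n f hcyc a b ha hb hab.ne p hab.symm q.symm)
    omega
  have noc4 : ¬ (G.Adj (f (-1)) a ∧ G.Adj (f 0) b) := by
    rintro ⟨p, q⟩
    have := hmax (n+2) _ (insert_two G n f hcyc b a hb ha hab.ne.symm p hab q.symm)
    omega
  by_cases hx : s.r (f (-1)) a
  · have hxb : ¬ s.r (f (-1)) b := fun h => hrab (s.iseqv.trans (s.iseqv.symm hx) h)
    have hyb : s.r (f 0) b := by
      by_contra h
      exact noc2 ⟨(hs _ b).mpr hxb, (hs _ b).mpr h⟩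
    have hya : ¬ s.r (f 0) a := fun h =>
      hrab (s.iseqv.symm (s.iseqv.trans (s.iseqv.symm hyb) h))
    exact noc3 ⟨(hs _ b).mpr hxb, (hs _ a).mpr hya⟩
  · have hya : s.r (f 0) a := by
      by_contra h
      exact noc1 ⟨(hs _ a).mpr hx, (hs _ a).mpr h⟩
    have hyb : ¬ s.r (f 0) b := fun h => hrab (s.iseqv.trans (s.iseqv.symm hya) h)
    exact noc4 ⟨(hs _ a).mpr hx, (hs _ b).mpr hyb⟩
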